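/- Let (M_n = (E_n, r_n) : n ∈ ℤ₊) be a sequence of finite matroids with r_n(E_n) = n and normalized rank functions ρ_n = r_n/n, with 𝓛_n the lattice of flats of M_n. Assume (i) for all m ≤ n there is a rank-preserving lattice embedding 𝓛_m → 𝓛_n, and (ii) if m divides n there is a stretch embedding 𝓛_m → 𝓛_n. Then for every k, the sequence of k-crop sets (T_k(ρ_n))_n converges in the Hausdorff distance to 𝐓_k = closure of ⋃_n T_k(ρ_n). -/

import Mathlib

/-- The rank of a set `X` in a matroid `M`: the largest cardinality of an independent
subset of `X`. -/
noncomputable def mrk {α : Type*} (M : Matroid α) (X : Set α) : ℕ :=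
  sSup (Set.ncard '' {I | M.Indep I ∧ I ⊆ X})

/-- The set `T_k(ρ)` of `k`-crops of the normalized rank function `ρ = r/c` of a
matroid `M`, over `k`-tuples of subsets of the ground set. -/
noncomputable def matCrops {α : Type*} (M : Matroid α) (c : ℝ) (k : ℕ) :
    Set (Finset (Fin k) → ℝ) :=
  {ψ | ∃ A : Fin k → Set α, (∀ i, A i ⊆ M.E) ∧
      ψ = fun I => (mrk M (⋃ i ∈ I, A i) : ℝ) / c}

/-- A lattice embedding between the lattices of flats of two matroids: an injective map
sending flats to flats and preserving meets (intersections) and joins (closures of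
unions). -/
def IsLatticeEmb {α : Type*} (M M' : Matroid α) (Λ : Set α → Set α) : Prop :=
  (∀ F, M.IsFlat F → M'.IsFlat (Λ F)) ∧
  (∀ F₁ F₂, M.IsFlat F₁ → M.IsFlat F₂ → Λ F₁ = Λ F₂ → F₁ = F₂) ∧
  (∀ F₁ F₂, M.IsFlat F₁ → M.IsFlat F₂ → Λ (F₁ ∩ F₂) = Λ F₁ ∩ Λ F₂) ∧
  (∀ F₁ F₂, M.IsFlat F₁ → M.IsFlat F₂ →
    Λ (M.closure (F₁ ∪ F₂)) = M'.closure (Λ F₁ ∪ Λ F₂))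

open Set Matroid

section Aux

variable {α : Type*} {M M' : Matroid α} {Λ : Set α → Set α}

/-- The closure of any set is a flat. -/
lemma mclosure_flat (M : Matroid α) (X : Set α) : M.IsFlat (M.closure X) := by
  rw [Matroid.closure_def, sInter_eq_iInter]
  have : Nonempty {F // F ∈ {F | M.IsFlat F ∧ X ∩ M.E ⊆ F}} :=
    ⟨⟨M.E, M.ground_isFlat, inter_subset_right⟩⟩
  exact Matroid.IsFlat.iInter (fun F => F.2.1)

/-- `mrk` is the cardinality of any basis'. -/
lemma mrk_basis' [M.Finite] {I X : Set α} (hI : M.IsBasis' I X) : mrk M X = I.ncard := by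
  have hub : ∀ n ∈ Set.ncard '' {J | M.Indep J ∧ J ⊆ X}, n ≤ I.ncard := by
    rintro n ⟨J, ⟨hJi, hJX⟩, rfl⟩
    obtain ⟨J', hJ', hsub⟩ := hJi.subset_isBasis'_of_subset hJX
    have he : J'.encard = I.encard := hJ'.encard_eq_encard hI
    have hJ'f : J'.Finite := M.set_finite J' hJ'.indep.subset_ground
    calc J.ncard ≤ J'.ncard := Set.ncard_le_ncard hsub hJ'f
      _ = I.ncard := by rw [Set.ncard, Set.ncard, he]
  refine le_antisymm (csSup_le ⟨I.ncard, ⟨I, ⟨hI.indep, hI.subset⟩, rfl⟩⟩ hub) ?_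
  exact le_csSup ⟨I.ncard, hub⟩ ⟨I, ⟨hI.indep, hI.subset⟩, rfl⟩

lemma mrk_closure [M.Finite] (X : Set α) : mrk M (M.closure X) = mrk M X := by
  obtain ⟨I, hI⟩ := M.exists_isBasis' X
  rw [mrk_basis' hI, mrk_basis' hI.isBasis_closure_right.isBasis']

lemma mrk_mono [M.Finite] {X Y : Set α} (h : X ⊆ Y) : mrk M X ≤ mrk M Y := by
  obtain ⟨I, hI⟩ := M.exists_isBasis' X
  obtain ⟨J, hJ, hIJ⟩ := hI.indep.subset_isBasis'_of_subset (hI.subset.trans h)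
  rw [mrk_basis' hI, mrk_basis' hJ]
  exact Set.ncard_le_ncard hIJ (M.set_finite J hJ.indep.subset_ground)

lemma mrk_empty (M : Matroid α) : mrk M (∅ : Set α) = 0 := by
  have h : {I | M.Indep I ∧ I ⊆ (∅ : Set α)} = {∅} := by
    ext I
    simp only [Set.mem_setOf_eq, Set.subset_empty_iff, Set.mem_singleton_iff]
    exact ⟨fun h => h.2, fun h => ⟨h ▸ M.empty_indep, h⟩⟩
  rw [mrk, h, Set.image_singleton, Set.ncard_empty, csSup_singleton]

/-- A lattice embedding sends the closure of a union of the `A i` to the closure of the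
union of the images of the closures of the `A i`. -/
lemma key_closure (hΛ : IsLatticeEmb M M' Λ) {k : ℕ} (A : Fin k → Set α)
    (I : Finset (Fin k)) (hI : I.Nonempty) :
    M'.closure (⋃ i ∈ I, Λ (M.closure (A i))) = Λ (M.closure (⋃ i ∈ I, A i)) := by
  induction I using Finset.cons_induction with
  | empty => exact absurd hI (by simp)
  | cons a s ha IH =>
    rcases s.eq_empty_or_nonempty with rfl | hs
    · simp only [Finset.cons_empty, Finset.mem_singleton, Set.iUnion_iUnion_eq_left]
      exact (hΛ.1 _ (mclosure_flat M (A a))).closure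
    · have hbu : ∀ (f : Fin k → Set α),
          (⋃ i ∈ Finset.cons a s ha, f i) = f a ∪ ⋃ i ∈ s, f i := by
        intro f; simp [Finset.cons_eq_insert]
      rw [hbu, hbu, ← M'.closure_union_closure_right_eq, IH hs,
        ← hΛ.2.2.2 _ _ (mclosure_flat M (A a)) (mclosure_flat M _)]
      rw [M.closure_union_closure_right_eq, M.closure_union_closure_left_eq]

lemma mrk_union_eq [M'.Finite] (hΛ : IsLatticeEmb M M' Λ) {k : ℕ} (A : Fin k → Set α)
    (I : Finset (Fin k)) (hI : I.Nonempty) :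
    mrk M' (⋃ i ∈ I, Λ (M.closure (A i))) = mrk M' (Λ (M.closure (⋃ i ∈ I, A i))) := by
  rw [← mrk_closure (M := M') (⋃ i ∈ I, Λ (M.closure (A i))), key_closure hΛ A I hI]

/-- Membership consequence of a rank-preserving lattice embedding. -/
lemma rp_mem [M.Finite] [M'.Finite] (hΛ : IsLatticeEmb M M' Λ)
    (hF : ∀ F, M.IsFlat F → mrk M' (Λ F) = mrk M F)
    {k : ℕ} (A : Fin k → Set α) (c' : ℝ) :
    (fun I => (mrk M (⋃ i ∈ I, A i) : ℝ) / c') ∈ matCrops M' c' k := by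
  refine ⟨fun i => Λ (M.closure (A i)),
    fun i => (hΛ.1 _ (mclosure_flat M (A i))).subset_ground, ?_⟩
  funext I
  rcases I.eq_empty_or_nonempty with rfl | hI
  · simp [mrk_empty]
  · congr 2
    rw [mrk_union_eq hΛ A I hI, hF _ (mclosure_flat M _), mrk_closure]

/-- Inclusion of crop sets arising from a stretch embedding. -/
lemma stretch_sub [M.Finite] [M'.Finite] (hΛ : IsLatticeEmb M M' Λ) {k : ℕ} {cn cm : ℝ}
    (hF : ∀ F, M.IsFlat F → (mrk M' (Λ F) : ℝ) / cn = (mrk M F : ℝ) / cm) :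
    matCrops M cm k ⊆ matCrops M' cn k := by
  rintro ψ ⟨A, hA, rfl⟩
  refine ⟨fun i => Λ (M.closure (A i)),
    fun i => (hΛ.1 _ (mclosure_flat M (A i))).subset_ground, ?_⟩
  funext I
  rcases I.eq_empty_or_nonempty with rfl | hI
  · simp [mrk_empty]
  · rw [mrk_union_eq hΛ A I hI, hF _ (mclosure_flat M _), mrk_closure]

end Aux

/-- Let `(Mₙ)` be matroids with `rₙ(Eₙ) = n`, such that (i) for `m ≤ n`
there is a rank-preserving lattice embedding `𝓛_m → 𝓛_n`, and (ii) for `m ∣ n` there is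
a stretch embedding `𝓛_m → 𝓛_n`. Then for every `k`, the `k`-crop sets `T_k(ρₙ)`
converge in the Hausdorff distance to the closure of their union. -/
theorem stmt6 {α : Type*} (M : ℕ → Matroid α) [∀ n, (M n).Finite]
    (hrank : ∀ n, 1 ≤ n → mrk (M n) (M n).E = n)
    (hRP : ∀ m n, 1 ≤ m → m ≤ n → ∃ Λ, IsLatticeEmb (M m) (M n) Λ ∧
      ∀ F, (M m).IsFlat F → mrk (M n) (Λ F) = mrk (M m) F)
    (hStretch : ∀ m n, 1 ≤ m → m ∣ n → ∃ Λ, IsLatticeEmb (M m) (M n) Λ ∧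
      ∀ F, (M m).IsFlat F →
        (mrk (M n) (Λ F) : ℝ) / (n : ℝ) = (mrk (M m) F : ℝ) / (m : ℝ))
    (k : ℕ) :
    Filter.Tendsto
      (fun n => Metric.hausdorffDist (matCrops (M n) (n : ℝ) k)
        (closure (⋃ n, ⋃ (_ : 1 ≤ n), matCrops (M n) (n : ℝ) k)))
      Filter.atTop (nhds 0) := by
  classical
  set T : ℕ → Set (Finset (Fin k) → ℝ) := fun n => matCrops (M n) (n : ℝ) k with hT
  set Tlim : Set (Finset (Fin k) → ℝ) := closure (⋃ n, ⋃ (_ : 1 ≤ n), T n) with hTlim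
  have hval : ∀ n, 1 ≤ n → ∀ ψ ∈ T n, ∀ I, 0 ≤ ψ I ∧ ψ I ≤ 1 := by
    rintro n hn ψ ⟨A, hA, rfl⟩ I
    have hle : mrk (M n) (⋃ i ∈ I, A i) ≤ n :=
      le_trans (mrk_mono (M := M n) (Set.iUnion₂_subset fun i _ => hA i))
        (le_of_eq (hrank n hn))
    have hn' : (0 : ℝ) < n := by exact_mod_cast hn
    constructor
    · positivity
    · rw [div_le_one hn']
      exact_mod_cast hle
  have step : ∀ m n, 1 ≤ m → m ≤ n → ∀ ψ ∈ T m, ∃ φ ∈ T n,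
      dist ψ φ ≤ (m : ℝ) / n := by
    intro m n hm hmn ψ hψ
    set q := n / m with hq
    have hq1 : 1 ≤ q := (Nat.one_le_div_iff (by omega)).2 hmn
    have hqm1 : 1 ≤ q * m := Nat.one_le_iff_ne_zero.2 (by positivity)
    have hqmn : q * m ≤ n := Nat.div_mul_le_self n m
    obtain ⟨Λ, hΛ, hF⟩ := hStretch m (q * m) hm ⟨q, mul_comm q m⟩
    have hψ' : ψ ∈ T (q * m) := stretch_sub hΛ hF hψ
    obtain ⟨A, hA, rfl⟩ := hψ'
    obtain ⟨Λ', hΛ', hF'⟩ := hRP (q * m) n hqm1 hqmn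
    refine ⟨fun I => (mrk (M (q * m)) (⋃ i ∈ I, A i) : ℝ) / n, rp_mem hΛ' hF' A _, ?_⟩
    have hmn0 : (0 : ℝ) ≤ (m : ℝ) / n := by positivity
    rw [dist_pi_le_iff hmn0]
    intro I
    set x : ℝ := (mrk (M (q * m)) (⋃ i ∈ I, A i) : ℝ) with hx
    have hx0 : 0 ≤ x := by positivity
    have hxa : x ≤ ((q * m : ℕ) : ℝ) := by
      rw [hx]
      have h1 := mrk_mono (M := M (q * m)) (X := ⋃ i ∈ I, A i) (Y := (M (q * m)).E)
        (Set.iUnion₂_subset fun i _ => hA i)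
      rw [hrank (q * m) hqm1] at h1
      exact_mod_cast h1
    set a : ℝ := ((q * m : ℕ) : ℝ) with ha
    set b : ℝ := (n : ℝ) with hb
    have ha0 : (0 : ℝ) < a := by rw [ha]; exact_mod_cast hqm1
    have hb0 : (0 : ℝ) < b := by rw [hb]; exact_mod_cast (le_trans hqm1 hqmn)
    have hab : a ≤ b := by rw [ha, hb]; exact_mod_cast hqmn
    have hba : b - a ≤ (m : ℝ) := by
      have hmm : 0 < m := by omega
      have hmod : n % m < m := Nat.mod_lt n hmm
      have hdm : q * m + n % m = n := by
        rw [hq, mul_comm]; exact Nat.div_add_mod n m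
      have hlt : n - q * m < m := by omega
      rw [ha, hb]
      have h2 : ((n : ℝ)) - ((q * m : ℕ) : ℝ) = ((n - q * m : ℕ) : ℝ) := by
        rw [Nat.cast_sub hqmn]
      rw [h2]
      exact_mod_cast le_of_lt hlt
    have heq : x / a - x / b = x * (b - a) / (a * b) := by field_simp
    have habs : dist (x / a) (x / b) = x * (b - a) / (a * b) := by
      rw [Real.dist_eq, heq, abs_of_nonneg]
      exact div_nonneg (mul_nonneg hx0 (by linarith)) (by positivity)
    calc dist (x / a) (x / b) = x * (b - a) / (a * b) := habs
      _ ≤ a * (b - a) / (a * b) := by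
          gcongr
      _ = (b - a) / b := mul_div_mul_left _ _ (ne_of_gt ha0)
      _ ≤ (m : ℝ) / b := by gcongr
  have hsubT : ∀ n, 1 ≤ n → T n ⊆ Tlim := fun n hn =>
    (Set.subset_iUnion₂ (s := fun n _ => T n) n hn).trans subset_closure
  have hball : Tlim ⊆ Metric.closedBall 0 1 := by
    refine closure_minimal (Set.iUnion₂_subset fun n hn => fun ψ hψ => ?_)
      Metric.isClosed_closedBall
    rw [Metric.mem_closedBall]
    refine (dist_pi_le_iff zero_le_one).2 fun I => ?_
    obtain ⟨h0, h1⟩ := hval n hn ψ hψ I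
    simp only [Pi.zero_apply]
    rw [Real.dist_eq, sub_zero, abs_of_nonneg h0]
    exact h1
  have hcomp : IsCompact Tlim :=
    (isCompact_closedBall (0 : Finset (Fin k) → ℝ) 1).of_isClosed_subset
      isClosed_closure hball
  rw [Metric.tendsto_atTop]
  intro ε hε
  set δ : ℝ := ε / 4 with hδ
  have hδ0 : 0 < δ := by positivity
  obtain ⟨t, hts, htf, htcov⟩ := hcomp.finite_cover_balls hδ0
  have hx : ∀ x ∈ t, ∃ m : ℕ, ∃ y, 1 ≤ m ∧ y ∈ T m ∧ dist x y < δ := by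
    intro x hx
    have hmem : x ∈ closure (⋃ n, ⋃ (_ : 1 ≤ n), T n) := hts hx
    rw [Metric.mem_closure_iff] at hmem
    obtain ⟨y, hy, hdy⟩ := hmem δ hδ0
    simp only [Set.mem_iUnion] at hy
    obtain ⟨m, hm, hym⟩ := hy
    exact ⟨m, y, hm, hym, hdy⟩
  choose! mm yy h1 h2 h3 using hx
  set N : ℕ := (htf.toFinset.sup fun x => max (mm x) ⌈(mm x : ℝ) / δ⌉₊) + 1 with hN
  refine ⟨N, fun n hn => ?_⟩
  have hn1 : 1 ≤ n := le_trans (by omega) hn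
  have hkey : ∀ x ∈ t, mm x ≤ n ∧ ((mm x : ℝ)) / n ≤ δ := by
    intro x hxt
    have hsup : max (mm x) ⌈(mm x : ℝ) / δ⌉₊ ≤ n := by
      have hle : max (mm x) ⌈(mm x : ℝ) / δ⌉₊ ≤ htf.toFinset.sup
          (fun x => max (mm x) ⌈(mm x : ℝ) / δ⌉₊) :=
        Finset.le_sup (f := fun x => max (mm x) ⌈(mm x : ℝ) / δ⌉₊)
          ((Set.Finite.mem_toFinset htf).2 hxt)
      omega
    refine ⟨le_trans (le_max_left _ _) hsup, ?_⟩
    have hceil : ⌈(mm x : ℝ) / δ⌉₊ ≤ n := le_trans (le_max_right _ _) hsup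
    have hdn : (mm x : ℝ) / δ ≤ n := le_trans (Nat.le_ceil _) (by exact_mod_cast hceil)
    have hn0 : (0 : ℝ) < n := by exact_mod_cast hn1
    rw [div_le_iff₀ hn0]
    rw [div_le_iff₀ hδ0] at hdn
    linarith
  have hHD : Metric.hausdorffDist (T n) Tlim ≤ 3 * δ := by
    refine Metric.hausdorffDist_le_of_mem_dist (by positivity) ?_ ?_
    · intro p hp
      exact ⟨p, hsubT n hn1 hp, by rw [dist_self]; positivity⟩
    · intro q hq
      obtain ⟨x, hxt, hqx⟩ := by
        have hc := htcov hq
        simp only [Set.mem_iUnion] at hc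
        exact hc
      obtain ⟨hmxn, hmxδ⟩ := hkey x hxt
      obtain ⟨φ, hφ, hdφ⟩ := step (mm x) n (h1 x hxt) hmxn (yy x) (h2 x hxt)
      refine ⟨φ, hφ, ?_⟩
      have hqx' : dist q x < δ := by
        rw [Metric.mem_ball] at hqx; exact hqx
      have h2' : dist x (yy x) < δ := h3 x hxt
      calc dist q φ ≤ dist q x + dist x φ := dist_triangle _ _ _
        _ ≤ dist q x + (dist x (yy x) + dist (yy x) φ) := by
            linarith [dist_triangle x (yy x) φ]
        _ ≤ δ + (δ + δ) := by
            have hy3 : dist (yy x) φ ≤ δ := le_trans hdφ hmxδ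
            linarith
        _ = 3 * δ := by ring
  have h0 : 0 ≤ Metric.hausdorffDist (T n) Tlim := Metric.hausdorffDist_nonneg
  rw [Real.dist_eq, sub_zero, abs_of_nonneg h0]
  calc Metric.hausdorffDist (T n) Tlim ≤ 3 * δ := hHD
    _ < ε := by rw [hδ]; linarith
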